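/- arXiv:1909.03633 — 6 statements merged into one kernel-verified Lean document; each statement's English description precedes it below -/
import Mathlib

section
/- Define J(u₀) = −√(2F(u₀)) + ∫₀^{u₀} √(F(t)/2) dt where F(s) = (s−1)e^s + 1. Then J(0) = 0, J is strictly decreasing on (0,∞), and consequently J(u₀) < 0 for all u₀ > 0. -/
open Real Set

noncomputable def Fa (s : ℝ) : ℝ := (s - 1) * Real.exp s + 1

noncomputable def J (u₀ : ℝ) : ℝ :=
  -Real.sqrt (2 * Fa u₀) + ∫ t in (0:ℝ)..u₀, Real.sqrt (Fa t / 2)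

lemma Fa_deriv (x : ℝ) : HasDerivAt Fa (x * Real.exp x) x := by
  have h : HasDerivAt (fun s : ℝ => (s - 1) * Real.exp s + 1)
      (1 * Real.exp x + (x - 1) * Real.exp x) x :=
    (((hasDerivAt_id x).sub_const 1).mul (Real.hasDerivAt_exp x)).add_const 1
  convert h using 1
  · rfl
  ring

lemma Fa_cont : Continuous Fa := by
  unfold Fa; continuity

lemma Fa_pos {x : ℝ} (hx : 0 < x) : 0 < Fa x := by
  have h1 : Real.exp (-x) * Real.exp x = 1 := by rw [← Real.exp_add]; simp
  have h2 : -x + 1 < Real.exp (-x) := Real.add_one_lt_exp (by linarith)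
  have h3 := Real.exp_pos x
  unfold Fa; nlinarith

lemma g_cont : Continuous (fun t => Real.sqrt (Fa t / 2)) :=
  Real.continuous_sqrt.comp (Fa_cont.div_const 2)

lemma J_hasDerivAt {x : ℝ} (hx : 0 < x) :
    HasDerivAt J (-(x * Real.exp x / Real.sqrt (2 * Fa x)) + Real.sqrt (Fa x / 2)) x := by
  have hFa : 0 < Fa x := Fa_pos hx
  have h1 : HasDerivAt (fun u => Real.sqrt (2 * Fa u))
      (2 * (x * Real.exp x) / (2 * Real.sqrt (2 * Fa x))) x :=
    ((Fa_deriv x).const_mul 2).sqrt (by positivity)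
  have h2 : HasDerivAt (fun u => ∫ t in (0:ℝ)..u, Real.sqrt (Fa t / 2))
      (Real.sqrt (Fa x / 2)) x :=
    (g_cont.integral_hasStrictDerivAt 0 x).hasDerivAt
  have h := h1.neg.add h2
  have hs : (0:ℝ) < Real.sqrt (2 * Fa x) := Real.sqrt_pos.mpr (by positivity)
  convert h using 2
  · rfl
  · rfl
  · rfl
  rw [mul_div_mul_left _ _ (two_ne_zero)]

lemma J_deriv_neg {x : ℝ} (hx : 0 < x) : deriv J x < 0 := by
  rw [(J_hasDerivAt hx).deriv]
  have hFa := Fa_pos hx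
  have hs : (0:ℝ) < Real.sqrt (2 * Fa x) := Real.sqrt_pos.mpr (by positivity)
  have key : Real.sqrt (Fa x / 2) * Real.sqrt (2 * Fa x) = Fa x := by
    rw [← Real.sqrt_mul (by positivity),
      show Fa x / 2 * (2 * Fa x) = (Fa x) ^ 2 by ring, Real.sqrt_sq hFa.le]
  have hexp : 1 < Real.exp x := by
    have := Real.exp_lt_exp.mpr hx
    simpa using this
  have hlt : Fa x < x * Real.exp x := by
    unfold Fa; nlinarith
  have h2 : (-(x * Real.exp x / Real.sqrt (2 * Fa x)) + Real.sqrt (Fa x / 2)) *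
      Real.sqrt (2 * Fa x) = Fa x - x * Real.exp x := by
    rw [add_mul, neg_mul, div_mul_cancel₀ _ hs.ne', key]
    ring
  nlinarith [h2, hlt, hs]

theorem J_neg : J 0 = 0 ∧ StrictAntiOn J (Set.Ioi 0) ∧ ∀ u₀ : ℝ, 0 < u₀ → J u₀ < 0 := by
  have hJ0 : J 0 = 0 := by
    unfold J Fa
    simp
  have hcont : Continuous J := by
    unfold J
    refine Continuous.add (Real.continuous_sqrt.comp (continuous_const.mul Fa_cont)).neg ?_
    exact continuous_iff_continuousAt.mpr fun x =>
      ((g_cont.integral_hasStrictDerivAt 0 x).hasDerivAt).continuousAt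
  have hanti : StrictAntiOn J (Set.Ici 0) := by
    apply strictAntiOn_of_deriv_neg (convex_Ici 0) hcont.continuousOn
    intro x hx
    rw [interior_Ici] at hx
    exact J_deriv_neg hx
  refine ⟨hJ0, hanti.mono (Set.Ioi_subset_Ici le_rfl), fun u₀ hu => ?_⟩
  have := hanti (Set.self_mem_Ici) (Set.mem_Ici.mpr hu.le) hu
  rwa [hJ0] at this
end

section
/- Suppose v₁, v₂ ∈ C²(Ω) ∩ C⁰(Ω̄) are both positive solutions of ε²Δv = (m/∫_Ω e^v dx) v e^v in Ω with v₁ = v₂ = u₀ on ∂Ω, where m, u₀, ε > 0. If ∫_Ω e^{v₁} dx ≥ ∫_Ω e^{v₂} dx, then v₁ ≥ v₂ in Ω. -/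
open Real Set MeasureTheory

/-- The Euclidean Laplacian, written as the sum of second directional derivatives
along the standard basis directions. -/
noncomputable def lap {N : ℕ} (u : EuclideanSpace ℝ (Fin N) → ℝ)
    (x : EuclideanSpace ℝ (Fin N)) : ℝ :=
  ∑ i : Fin N, fderiv ℝ (fun y => fderiv ℝ u y (EuclideanSpace.single i 1)) x
    (EuclideanSpace.single i 1)


lemma second_deriv_test_aux {N : ℕ} {Ω : Set (EuclideanSpace ℝ (Fin N))} (hΩ : IsOpen Ω)
    {w : EuclideanSpace ℝ (Fin N) → ℝ} (hw : ContDiffOn ℝ 2 w Ω)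
    {x₀ : EuclideanSpace ℝ (Fin N)} (hx₀ : x₀ ∈ Ω) (hmax : IsLocalMax w x₀)
    (e : EuclideanSpace ℝ (Fin N)) :
    fderiv ℝ (fun y => fderiv ℝ w y e) x₀ e ≤ 0 := by
  by_contra hc
  push_neg at hc
  set g : EuclideanSpace ℝ (Fin N) → ℝ := fun y => fderiv ℝ w y e with hg_def
  have hwd : DifferentiableOn ℝ w Ω := hw.differentiableOn (by norm_num)
  have hg1 : ContDiffOn ℝ 1 g Ω := by
    have h := hw.fderiv_of_isOpen (m := 1) hΩ (by norm_num)
    exact h.clm_apply contDiffOn_const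
  have hgdiff : DifferentiableAt ℝ g x₀ :=
    ((hg1.differentiableOn (by norm_num)) x₀ hx₀).differentiableAt (hΩ.mem_nhds hx₀)
  set line : ℝ → EuclideanSpace ℝ (Fin N) := fun t => x₀ + t • e with hline_def
  have hline0 : line 0 = x₀ := by simp [hline_def]
  have hlinecont : Continuous line := by continuity
  have hlined : ∀ t, HasDerivAt line e t := by
    intro t
    have h := ((hasDerivAt_id t).smul_const e).const_add x₀
    simpa [hline_def] using h
  set φ : ℝ → ℝ := fun t => w (line t) with hφ_def
  set ψ : ℝ → ℝ := fun t => g (line t) with hψ_def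
  -- derivative of φ at points on the line in Ω
  have hφderiv : ∀ t, line t ∈ Ω → HasDerivAt φ (ψ t) t := by
    intro t ht
    have hwd' : DifferentiableAt ℝ w (line t) :=
      (hwd (line t) ht).differentiableAt (hΩ.mem_nhds ht)
    exact hwd'.hasFDerivAt.comp_hasDerivAt t (hlined t)
  -- ψ has derivative c := fderiv g x₀ e at 0 with c > 0
  have hψderiv : HasDerivAt ψ (fderiv ℝ g x₀ e) 0 := by
    have hgd0 : DifferentiableAt ℝ g (line 0) := by rwa [hline0]
    have h := hgd0.hasFDerivAt.comp_hasDerivAt 0 (hlined 0)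
    rw [hline0] at h
    exact h
  -- φ has local max at 0
  have hφmax : IsLocalMax φ 0 := by
    have hmax' : IsLocalMax w (line 0) := by rwa [hline0]
    exact hmax'.comp_continuous hlinecont.continuousAt
  have hψ0 : ψ 0 = 0 := by
    have h := hφderiv 0 (by rwa [hline0])
    have := hφmax.deriv_eq_zero
    rw [h.deriv] at this
    exact this
  -- slope positivity near 0
  have hslope : Filter.Tendsto (slope ψ 0) (nhdsWithin 0 {(0:ℝ)}ᶜ) (nhds (fderiv ℝ g x₀ e)) :=
    hasDerivAt_iff_tendsto_slope.mp hψderiv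
  have hev : ∀ᶠ t in nhdsWithin 0 {(0:ℝ)}ᶜ, 0 < slope ψ 0 t :=
    hslope.eventually (eventually_gt_nhds hc)
  rw [eventually_nhdsWithin_iff, Metric.eventually_nhds_iff] at hev
  obtain ⟨δ₂, hδ₂pos, hδ₂⟩ := hev
  have hev2 : ∀ᶠ t in nhds (0:ℝ), line t ∈ Ω ∧ φ t ≤ φ 0 := by
    have h1 : ∀ᶠ t in nhds (0:ℝ), line t ∈ Ω := by
      have : Ω ∈ nhds (line 0) := hΩ.mem_nhds (by rwa [hline0])
      exact hlinecont.continuousAt.preimage_mem_nhds this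
    exact h1.and hφmax
  rw [Metric.eventually_nhds_iff] at hev2
  obtain ⟨δ₁, hδ₁pos, hδ₁⟩ := hev2
  set δ := min δ₁ δ₂ / 2 with hδ_def
  have hδpos : 0 < δ := by positivity
  have hδlt₁ : δ < δ₁ := by
    have := min_le_left δ₁ δ₂; simp only [hδ_def]; linarith
  have hδlt₂ : δ < δ₂ := by
    have := min_le_right δ₁ δ₂; simp only [hδ_def]; linarith
  have hmem : ∀ t ∈ Icc (0:ℝ) δ, line t ∈ Ω ∧ φ t ≤ φ 0 := by
    intro t ht
    apply hδ₁
    rw [Real.dist_eq, sub_zero, abs_of_nonneg ht.1]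
    exact lt_of_le_of_lt ht.2 hδlt₁
  -- MVT
  have hφcont : ContinuousOn φ (Icc 0 δ) := by
    apply (hw.continuousOn.comp hlinecont.continuousOn)
    intro t ht
    exact (hmem t ht).1
  obtain ⟨ξ, hξ, hξeq⟩ := exists_hasDerivAt_eq_slope φ ψ hδpos hφcont
    (fun t ht => hφderiv t (hmem t (Ioo_subset_Icc_self ht)).1)
  have hψξpos : 0 < ψ ξ := by
    have hs : 0 < slope ψ 0 ξ := by
      apply hδ₂ (y := ξ) _ (by simpa using (ne_of_gt hξ.1))
      rw [Real.dist_eq, sub_zero, abs_of_pos hξ.1]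
      exact lt_trans hξ.2 hδlt₂
    rw [slope_def_field] at hs
    have : 0 < (ψ ξ - ψ 0) / (ξ - 0) := hs
    rw [hψ0, sub_zero, sub_zero] at this
    exact (div_pos_iff.mp this).resolve_right (fun h => absurd hξ.1 (not_lt.mpr h.2.le)) |>.1
  have hφδ : φ δ ≤ φ 0 := (hmem δ (right_mem_Icc.mpr hδpos.le)).2
  have : ψ ξ ≤ 0 := by
    rw [hξeq, sub_zero]
    apply div_nonpos_of_nonpos_of_nonneg <;> linarith
  linarith

theorem nonlocal_comparison {N : ℕ}
    (Ω : Set (EuclideanSpace ℝ (Fin N)))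
    (hΩopen : IsOpen Ω) (hΩbdd : Bornology.IsBounded Ω) (hΩconn : IsConnected Ω)
    (ε m u₀ : ℝ) (hε : 0 < ε) (hm : 0 < m) (hu₀ : 0 < u₀)
    (v₁ v₂ : EuclideanSpace ℝ (Fin N) → ℝ)
    (hv₁_cont : ContinuousOn v₁ (closure Ω)) (hv₂_cont : ContinuousOn v₂ (closure Ω))
    (hv₁_smooth : ContDiffOn ℝ 2 v₁ Ω) (hv₂_smooth : ContDiffOn ℝ 2 v₂ Ω)
    (hv₁_pos : ∀ x ∈ Ω, 0 < v₁ x) (hv₂_pos : ∀ x ∈ Ω, 0 < v₂ x)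
    (heq₁ : ∀ x ∈ Ω, ε ^ 2 * lap v₁ x
      = m / (∫ y in Ω, Real.exp (v₁ y)) * v₁ x * Real.exp (v₁ x))
    (heq₂ : ∀ x ∈ Ω, ε ^ 2 * lap v₂ x
      = m / (∫ y in Ω, Real.exp (v₂ y)) * v₂ x * Real.exp (v₂ x))
    (hbdry₁ : ∀ x ∈ frontier Ω, v₁ x = u₀)
    (hbdry₂ : ∀ x ∈ frontier Ω, v₂ x = u₀)
    (hint : (∫ y in Ω, Real.exp (v₂ y)) ≤ ∫ y in Ω, Real.exp (v₁ y)) :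
    ∀ x ∈ Ω, v₂ x ≤ v₁ x := by
  intro x hx
  by_contra hlt
  push_neg at hlt
  set I₁ := ∫ y in Ω, Real.exp (v₁ y) with hI₁def
  set I₂ := ∫ y in Ω, Real.exp (v₂ y) with hI₂def
  have hK : IsCompact (closure Ω) := hΩbdd.isCompact_closure
  have hI₂int : IntegrableOn (fun y => Real.exp (v₂ y)) Ω volume :=
    ((Real.continuous_exp.comp_continuousOn hv₂_cont).integrableOn_compact hK).mono_set
      subset_closure
  have hI₂pos : 0 < I₂ := by
    rw [hI₂def, setIntegral_pos_iff_support_of_nonneg_ae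
      (Filter.Eventually.of_forall fun y => (Real.exp_pos _).le) hI₂int]
    have hsupp : Function.support (fun y => Real.exp (v₂ y)) = univ := by
      ext y; simp [Real.exp_ne_zero]
    rw [hsupp, univ_inter]
    exact hΩopen.measure_pos volume hΩconn.nonempty
  have hI₁pos : 0 < I₁ := lt_of_lt_of_le hI₂pos hint
  set w : EuclideanSpace ℝ (Fin N) → ℝ := fun z => v₂ z - v₁ z with hwdef
  have hwcont : ContinuousOn w (closure Ω) := hv₂_cont.sub hv₁_cont
  have hKne : (closure Ω).Nonempty := ⟨x, subset_closure hx⟩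
  obtain ⟨x₀, hx₀K, hx₀max⟩ := hK.exists_isMaxOn hKne hwcont
  have hwx₀pos : 0 < w x₀ := by
    have h1 : 0 < w x := sub_pos.mpr hlt
    exact lt_of_lt_of_le h1 (hx₀max (subset_closure hx))
  have hx₀Ω : x₀ ∈ Ω := by
    by_contra hco
    have hfr : x₀ ∈ frontier Ω := by
      rw [hΩopen.frontier_eq]; exact ⟨hx₀K, hco⟩
    have h1 := hbdry₁ x₀ hfr
    have h2 := hbdry₂ x₀ hfr
    have : w x₀ = 0 := by rw [hwdef]; simp [h1, h2]
    linarith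
  have hlocmax : IsLocalMax w x₀ :=
    hx₀max.isLocalMax (Filter.mem_of_superset (hΩopen.mem_nhds hx₀Ω) subset_closure)
  -- Laplacian comparison at x₀
  have hlap : lap v₂ x₀ ≤ lap v₁ x₀ := by
    unfold lap
    apply Finset.sum_le_sum
    intro i _
    set e := EuclideanSpace.single (𝕜 := ℝ) i (1:ℝ) with he
    have hkey := second_deriv_test_aux hΩopen (hv₂_smooth.sub hv₁_smooth) hx₀Ω hlocmax e
    have hC₂ : ContDiffOn ℝ 1 (fun y => fderiv ℝ v₂ y e) Ω :=
      (hv₂_smooth.fderiv_of_isOpen (m := 1) hΩopen (by norm_num)).clm_apply contDiffOn_const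
    have hC₁ : ContDiffOn ℝ 1 (fun y => fderiv ℝ v₁ y e) Ω :=
      (hv₁_smooth.fderiv_of_isOpen (m := 1) hΩopen (by norm_num)).clm_apply contDiffOn_const
    have hd₂ : DifferentiableAt ℝ (fun y => fderiv ℝ v₂ y e) x₀ :=
      ((hC₂.differentiableOn (by norm_num)) x₀ hx₀Ω).differentiableAt (hΩopen.mem_nhds hx₀Ω)
    have hd₁ : DifferentiableAt ℝ (fun y => fderiv ℝ v₁ y e) x₀ :=
      ((hC₁.differentiableOn (by norm_num)) x₀ hx₀Ω).differentiableAt (hΩopen.mem_nhds hx₀Ω)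
    have heqn : (fun y => fderiv ℝ (fun z => v₂ z - v₁ z) y e) =ᶠ[nhds x₀]
        (fun y => fderiv ℝ v₂ y e - fderiv ℝ v₁ y e) := by
      filter_upwards [hΩopen.mem_nhds hx₀Ω] with y hy
      have h2 : DifferentiableAt ℝ v₂ y :=
        ((hv₂_smooth.differentiableOn (by norm_num)) y hy).differentiableAt
          (hΩopen.mem_nhds hy)
      have h1 : DifferentiableAt ℝ v₁ y :=
        ((hv₁_smooth.differentiableOn (by norm_num)) y hy).differentiableAt
          (hΩopen.mem_nhds hy)
      rw [fderiv_fun_sub h2 h1]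
      rfl
    have hfd : fderiv ℝ (fun y => fderiv ℝ (fun z => v₂ z - v₁ z) y e) x₀
        = fderiv ℝ (fun y => fderiv ℝ v₂ y e - fderiv ℝ v₁ y e) x₀ := heqn.fderiv_eq
    have hsub : fderiv ℝ (fun y => fderiv ℝ v₂ y e - fderiv ℝ v₁ y e) x₀ e
        = fderiv ℝ (fun y => fderiv ℝ v₂ y e) x₀ e
          - fderiv ℝ (fun y => fderiv ℝ v₁ y e) x₀ e := by
      rw [fderiv_fun_sub hd₂ hd₁]; rfl
    rw [hfd, hsub] at hkey
    linarith
  -- final arithmetic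
  have h1 := heq₁ x₀ hx₀Ω
  have h2 := heq₂ x₀ hx₀Ω
  have hv1pos := hv₁_pos x₀ hx₀Ω
  have hv2pos := hv₂_pos x₀ hx₀Ω
  have hlt₀ : v₁ x₀ < v₂ x₀ := sub_pos.mp hwx₀pos
  have hε2 : ε ^ 2 * lap v₂ x₀ ≤ ε ^ 2 * lap v₁ x₀ :=
    mul_le_mul_of_nonneg_left hlap (sq_nonneg ε)
  rw [h1, h2] at hε2
  have hfrac : m / I₁ ≤ m / I₂ := by gcongr
  have hfracpos : 0 < m / I₁ := div_pos hm hI₁pos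
  have hprod : v₁ x₀ * Real.exp (v₁ x₀) < v₂ x₀ * Real.exp (v₂ x₀) := by
    have := Real.exp_lt_exp.mpr hlt₀
    nlinarith [Real.exp_pos (v₁ x₀)]
  have hq : 0 < v₂ x₀ * Real.exp (v₂ x₀) := mul_pos hv2pos (Real.exp_pos _)
  nlinarith [mul_le_mul_of_nonneg_right hfrac hq.le,
    mul_lt_mul_of_pos_left hprod hfracpos]
end

section
/- Any two solutions v₁, v₂ ∈ C²(Ω) ∩ C⁰(Ω̄) of the nonlocal problem ε²Δv = (m/∫_Ω e^v dx) v e^v in Ω, v = u₀ on ∂Ω, with m, u₀, ε > 0 positive constants, are equal: v₁ ≡ v₂. -/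
open Real Set MeasureTheory

/-- One-dimensional second derivative test at a local maximum. -/
lemma aux_second_deriv_nonpos {g : ℝ → ℝ} {L : ℝ}
    (hdiff : ∀ᶠ t in nhds (0:ℝ), DifferentiableAt ℝ g t)
    (hg' : HasDerivAt (deriv g) L 0)
    (hmax : IsLocalMax g 0) : L ≤ 0 := by
  by_contra hL
  push_neg at hL
  have h0 : deriv g 0 = 0 := hmax.deriv_eq_zero
  have hslope : Filter.Tendsto (slope (deriv g) 0) (nhdsWithin 0 {(0:ℝ)}ᶜ) (nhds L) :=
    hasDerivAt_iff_tendsto_slope.mp hg'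
  have h1 : ∀ᶠ t in nhdsWithin 0 {(0:ℝ)}ᶜ, 0 < slope (deriv g) 0 t :=
    hslope.eventually (eventually_gt_nhds hL)
  have h2 : ∀ᶠ t in nhdsWithin 0 (Set.Ioi (0:ℝ)), 0 < slope (deriv g) 0 t :=
    h1.filter_mono (nhdsWithin_mono 0 (fun t ht => ne_of_gt ht))
  have hpos : ∀ᶠ t in nhdsWithin 0 (Set.Ioi (0:ℝ)), 0 < deriv g t := by
    filter_upwards [h2, self_mem_nhdsWithin] with t ht ht0
    have hs : slope (deriv g) 0 t = deriv g t / t := by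
      simp [slope_def_field, h0]
    rw [hs] at ht
    have ht0' : (0:ℝ) < t := ht0
    rcases div_pos_iff.mp ht with ⟨h, _⟩ | ⟨_, h⟩ <;> linarith
  have hall : ∀ᶠ t in nhdsWithin 0 (Set.Ioi (0:ℝ)),
      0 < deriv g t ∧ DifferentiableAt ℝ g t ∧ g t ≤ g 0 := by
    filter_upwards [hpos, eventually_nhdsWithin_of_eventually_nhds hdiff,
      eventually_nhdsWithin_of_eventually_nhds hmax] with t h₁ h₂ h₃
    exact ⟨h₁, h₂, h₃⟩
  rcases mem_nhdsGT_iff_exists_Ioo_subset.mp hall with ⟨δ, hδ, hsub⟩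
  have hδ0 : (0:ℝ) < δ := hδ
  have hhalf : δ/2 ∈ Set.Ioo (0:ℝ) δ := ⟨by linarith, by linarith⟩
  have hg0 : DifferentiableAt ℝ g 0 := hdiff.self_of_nhds
  have hcont : ContinuousOn g (Set.Icc 0 (δ/2)) := by
    intro t ht
    rcases eq_or_lt_of_le ht.1 with h | h
    · rw [← h]
      exact hg0.continuousAt.continuousWithinAt
    · have : t ∈ Set.Ioo (0:ℝ) δ := ⟨h, lt_of_le_of_lt ht.2 (by linarith)⟩
      exact (hsub this).2.1.continuousAt.continuousWithinAt
  have hmono : StrictMonoOn g (Set.Icc 0 (δ/2)) := by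
    apply strictMonoOn_of_deriv_pos (convex_Icc 0 (δ/2)) hcont
    intro t ht
    rw [interior_Icc] at ht
    exact (hsub ⟨ht.1, lt_of_lt_of_le ht.2 (by linarith)⟩).1
  have hlt : g 0 < g (δ/2) :=
    hmono (Set.left_mem_Icc.mpr (by linarith)) ⟨le_of_lt (by linarith), le_refl _⟩ (by linarith)
  exact absurd (hsub hhalf).2.2 (not_le.mpr hlt)

/-- The map `y ↦ (fderiv ℝ u y) e` is differentiable at interior points for `C²` functions. -/
lemma aux_hasFDerivAt_fderiv_apply {N : ℕ} {Ω : Set (EuclideanSpace ℝ (Fin N))}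
    (hΩ : IsOpen Ω) {u : EuclideanSpace ℝ (Fin N) → ℝ} (hu : ContDiffOn ℝ 2 u Ω)
    {x : EuclideanSpace ℝ (Fin N)} (hx : x ∈ Ω) (e : EuclideanSpace ℝ (Fin N)) :
    HasFDerivAt (fun y => fderiv ℝ u y e)
      ((fderiv ℝ (fderiv ℝ u) x).flip e) x := by
  have hF : ContDiffOn ℝ 1 (fderiv ℝ u) Ω := hu.fderiv_of_isOpen hΩ (by norm_num)
  have hFx : DifferentiableAt ℝ (fderiv ℝ u) x :=
    ((hF.differentiableOn one_ne_zero) x hx).differentiableAt (hΩ.mem_nhds hx)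
  have := hFx.hasFDerivAt.clm_apply (hasFDerivAt_const e x)
  simpa using this

/-- At an interior local maximum of a `C²` function, each second directional
derivative is nonpositive. -/
lemma aux_dir_second_deriv_nonpos {N : ℕ} {Ω : Set (EuclideanSpace ℝ (Fin N))}
    (hΩ : IsOpen Ω) {z : EuclideanSpace ℝ (Fin N) → ℝ} (hz : ContDiffOn ℝ 2 z Ω)
    {x : EuclideanSpace ℝ (Fin N)} (hx : x ∈ Ω) (hmax : IsLocalMax z x)
    (e : EuclideanSpace ℝ (Fin N)) :
    fderiv ℝ (fun y => fderiv ℝ z y e) x e ≤ 0 := by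
  have hzdiff : ∀ y ∈ Ω, DifferentiableAt ℝ z y := fun y hy =>
    ((hz.differentiableOn (by norm_num)) y hy).differentiableAt (hΩ.mem_nhds hy)
  have hG : HasFDerivAt (fun y => fderiv ℝ z y e)
      ((fderiv ℝ (fderiv ℝ z) x).flip e) x := aux_hasFDerivAt_fderiv_apply hΩ hz hx e
  set c : ℝ → EuclideanSpace ℝ (Fin N) := fun t => x + t • e with hc_def
  have hc0 : c 0 = x := by simp [hc_def]
  have hc : ∀ t : ℝ, HasDerivAt c e t := by
    intro t
    have : HasDerivAt (fun s : ℝ => s • e) ((1:ℝ) • e) t := (hasDerivAt_id t).smul_const e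
    simpa [hc_def] using this.const_add x
  have hccont : Continuous c := by
    have : Continuous fun t : ℝ => t • e := by continuity
    exact continuous_const.add this
  have hctend : Filter.Tendsto c (nhds 0) (nhds x) := by
    rw [← hc0]; exact hccont.continuousAt
  have hmem : ∀ᶠ t in nhds (0:ℝ), c t ∈ Ω := hctend.eventually (hΩ.eventually_mem hx)
  set g : ℝ → ℝ := fun t => z (c t) with hg_def
  have hdiff_g : ∀ᶠ t in nhds (0:ℝ), DifferentiableAt ℝ g t := by
    filter_upwards [hmem] with t ht
    exact (hzdiff (c t) ht).comp t (hc t).differentiableAt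
  have hEq : deriv g =ᶠ[nhds (0:ℝ)] fun t => fderiv ℝ z (c t) e := by
    filter_upwards [hmem] with t ht
    exact ((hzdiff (c t) ht).hasFDerivAt.comp_hasDerivAt t (hc t)).deriv
  have hGc : HasDerivAt (fun t => fderiv ℝ z (c t) e)
      (((fderiv ℝ (fderiv ℝ z) x).flip e) e) 0 := by
    have := hG.comp_hasDerivAt_of_eq 0 (hc 0) hc0.symm
    exact this
  have hg' : HasDerivAt (deriv g) (((fderiv ℝ (fderiv ℝ z) x).flip e) e) 0 :=
    (hEq.hasDerivAt_iff).mpr hGc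
  have hmax_g : IsLocalMax g 0 := by
    have := hctend.eventually hmax
    filter_upwards [this] with t ht
    simpa [hg_def, hc0] using ht
  have hL : ((fderiv ℝ (fderiv ℝ z) x).flip e) e ≤ 0 :=
    aux_second_deriv_nonpos hdiff_g hg' hmax_g
  rw [hG.fderiv]
  exact hL

/-- The Laplacian is nonpositive at an interior local maximum. -/
lemma aux_lap_nonpos {N : ℕ} {Ω : Set (EuclideanSpace ℝ (Fin N))}
    (hΩ : IsOpen Ω) {z : EuclideanSpace ℝ (Fin N) → ℝ} (hz : ContDiffOn ℝ 2 z Ω)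
    {x : EuclideanSpace ℝ (Fin N)} (hx : x ∈ Ω) (hmax : IsLocalMax z x) :
    lap z x ≤ 0 := by
  apply Finset.sum_nonpos
  intro i _
  exact aux_dir_second_deriv_nonpos hΩ hz hx hmax _

/-- Laplacian of a difference. -/
lemma aux_lap_sub {N : ℕ} {Ω : Set (EuclideanSpace ℝ (Fin N))}
    (hΩ : IsOpen Ω) {u v : EuclideanSpace ℝ (Fin N) → ℝ}
    (hu : ContDiffOn ℝ 2 u Ω) (hv : ContDiffOn ℝ 2 v Ω)
    {x : EuclideanSpace ℝ (Fin N)} (hx : x ∈ Ω) :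
    lap (fun y => u y - v y) x = lap u x - lap v x := by
  have hudiff : ∀ y ∈ Ω, DifferentiableAt ℝ u y := fun y hy =>
    ((hu.differentiableOn (by norm_num)) y hy).differentiableAt (hΩ.mem_nhds hy)
  have hvdiff : ∀ y ∈ Ω, DifferentiableAt ℝ v y := fun y hy =>
    ((hv.differentiableOn (by norm_num)) y hy).differentiableAt (hΩ.mem_nhds hy)
  unfold lap
  rw [← Finset.sum_sub_distrib]
  apply Finset.sum_congr rfl
  intro i _
  set e := EuclideanSpace.single i (1:ℝ)
  have hEq : (fun y => fderiv ℝ (fun w => u w - v w) y e)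
      =ᶠ[nhds x] fun y => fderiv ℝ u y e - fderiv ℝ v y e := by
    filter_upwards [hΩ.eventually_mem hx] with y hy
    rw [fderiv_fun_sub (hudiff y hy) (hvdiff y hy)]
    simp
  rw [hEq.fderiv_eq]
  have h1 := aux_hasFDerivAt_fderiv_apply hΩ hu hx e
  have h2 := aux_hasFDerivAt_fderiv_apply hΩ hv hx e
  rw [fderiv_fun_sub h1.differentiableAt h2.differentiableAt]
  simp

/-- One-sided comparison between two solutions of the nonlocal problem. -/
lemma aux_one_side {N : ℕ}
    (Ω : Set (EuclideanSpace ℝ (Fin N)))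
    (hΩopen : IsOpen Ω) (hΩbdd : Bornology.IsBounded Ω) (hne : Ω.Nonempty)
    (ε m u₀ : ℝ) (hε : 0 < ε) (hm : 0 < m) (hu₀ : 0 < u₀)
    (v₁ v₂ : EuclideanSpace ℝ (Fin N) → ℝ)
    (hv₁_cont : ContinuousOn v₁ (closure Ω)) (hv₂_cont : ContinuousOn v₂ (closure Ω))
    (hv₁_smooth : ContDiffOn ℝ 2 v₁ Ω) (hv₂_smooth : ContDiffOn ℝ 2 v₂ Ω)
    (hv₁_pos : ∀ x ∈ Ω, 0 < v₁ x) (hv₂_pos : ∀ x ∈ Ω, 0 < v₂ x)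
    (heq₁ : ∀ x ∈ Ω, ε ^ 2 * lap v₁ x
      = m / (∫ y in Ω, Real.exp (v₁ y)) * v₁ x * Real.exp (v₁ x))
    (heq₂ : ∀ x ∈ Ω, ε ^ 2 * lap v₂ x
      = m / (∫ y in Ω, Real.exp (v₂ y)) * v₂ x * Real.exp (v₂ x))
    (hbdry₁ : ∀ x ∈ frontier Ω, v₁ x = u₀)
    (hbdry₂ : ∀ x ∈ frontier Ω, v₂ x = u₀) :
    ∀ x ∈ closure Ω, v₂ x ≤ v₁ x := by
  by_contra hcon
  push_neg at hcon
  obtain ⟨x₀, hx₀, hx₀lt⟩ := hcon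
  -- compactness setup
  have hK : IsCompact (closure Ω) := hΩbdd.isCompact_closure
  have hKne : (closure Ω).Nonempty := hne.closure
  set z : EuclideanSpace ℝ (Fin N) → ℝ := fun y => v₂ y - v₁ y with hz_def
  have hzc : ContinuousOn z (closure Ω) := hv₂_cont.sub hv₁_cont
  obtain ⟨xs, hxsK, hxsmax⟩ := hK.exists_isMaxOn hKne hzc
  set M : ℝ := z xs with hM_def
  have hMpos : 0 < M := lt_of_lt_of_le (by simpa [hz_def] using hx₀lt) (hxsmax hx₀)
  -- the max point is interior
  have hxsΩ : xs ∈ Ω := by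
    by_contra hxs
    have hfr : xs ∈ frontier Ω := by
      rw [hΩopen.frontier_eq]; exact ⟨hxsK, hxs⟩
    have : M = 0 := by simp [hM_def, hz_def, hbdry₁ xs hfr, hbdry₂ xs hfr]
    linarith
  -- Laplacian inequality at the max point
  have hzsm : ContDiffOn ℝ 2 z Ω := hv₂_smooth.sub hv₁_smooth
  have hlocmax : IsLocalMax z xs := by
    filter_upwards [hΩopen.eventually_mem hxsΩ] with y hy
    exact hxsmax (subset_closure hy)
  have hlapz : lap z xs ≤ 0 := aux_lap_nonpos hΩopen hzsm hxsΩ hlocmax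
  have hlapsub : lap z xs = lap v₂ xs - lap v₁ xs :=
    aux_lap_sub hΩopen hv₂_smooth hv₁_smooth hxsΩ
  -- integrals
  set I₁ : ℝ := ∫ y in Ω, Real.exp (v₁ y) with hI₁_def
  set I₂ : ℝ := ∫ y in Ω, Real.exp (v₂ y) with hI₂_def
  have hΩmeas : MeasurableSet Ω := hΩopen.measurableSet
  have hint₁ : IntegrableOn (fun y => Real.exp (v₁ y)) Ω :=
    ((hv₁_cont.rexp).integrableOn_compact hK).mono_set subset_closure
  have hint₂ : IntegrableOn (fun y => Real.exp (v₂ y)) Ω :=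
    ((hv₂_cont.rexp).integrableOn_compact hK).mono_set subset_closure
  have hvol : (0:ℝ) < (volume Ω).toReal := by
    refine ENNReal.toReal_pos (ne_of_gt (hΩopen.measure_pos volume hne)) ?_
    exact ne_of_lt (lt_of_le_of_lt (measure_mono subset_closure) hK.measure_lt_top)
  have hI₁pos : 0 < I₁ := by
    have h1 : (volume Ω).toReal = ∫ _ in Ω, (1:ℝ) := by simp; rfl
    have h2 : ∫ _ in Ω, (1:ℝ) ≤ I₁ := by
      apply setIntegral_mono_on ((integrableOn_const_iff (C := (1:ℝ))).mpr (Or.inr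
        (lt_of_le_of_lt (measure_mono subset_closure) hK.measure_lt_top))) hint₁ hΩmeas
      intro y hy
      have := hv₁_pos y hy
      nlinarith [Real.add_one_le_exp (v₁ y)]
    linarith [h1 ▸ h2]
  have hI₂pos : 0 < I₂ := by
    have h1 : (volume Ω).toReal = ∫ _ in Ω, (1:ℝ) := by simp; rfl
    have h2 : ∫ _ in Ω, (1:ℝ) ≤ I₂ := by
      apply setIntegral_mono_on ((integrableOn_const_iff (C := (1:ℝ))).mpr (Or.inr
        (lt_of_le_of_lt (measure_mono subset_closure) hK.measure_lt_top))) hint₂ hΩmeas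
      intro y hy
      have := hv₂_pos y hy
      nlinarith [Real.add_one_le_exp (v₂ y)]
    linarith [h1 ▸ h2]
  -- integral comparison
  have hI₂le : I₂ ≤ Real.exp M * I₁ := by
    have : ∀ y ∈ Ω, Real.exp (v₂ y) ≤ Real.exp M * Real.exp (v₁ y) := by
      intro y hy
      have hzy : v₂ y - v₁ y ≤ M := hxsmax (subset_closure hy)
      rw [← Real.exp_add]
      exact Real.exp_le_exp.mpr (by linarith)
    calc I₂ ≤ ∫ y in Ω, Real.exp M * Real.exp (v₁ y) :=
          setIntegral_mono_on hint₂ (hint₁.const_mul _) hΩmeas this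
      _ = Real.exp M * I₁ := by rw [integral_const_mul]
  -- PDE comparison at the max point
  have hPDE : m / I₂ * v₂ xs * Real.exp (v₂ xs) ≤ m / I₁ * v₁ xs * Real.exp (v₁ xs) := by
    have h := heq₂ xs hxsΩ
    have h' := heq₁ xs hxsΩ
    have hε2 : 0 < ε ^ 2 := by positivity
    nlinarith [hlapsub ▸ hlapz]
  -- derive the contradiction
  set a : ℝ := v₁ xs with ha_def
  set b : ℝ := v₂ xs with hb_def
  have hapos : 0 < a := hv₁_pos xs hxsΩ
  have hbM : b = a + M := by simp [hM_def, hz_def, ha_def, hb_def]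
  have heb : Real.exp b = Real.exp M * Real.exp a := by
    rw [hbM, Real.exp_add]; ring
  have h1 : m * (b * Real.exp b) * I₁ ≤ m * (a * Real.exp a) * I₂ := by
    have := hPDE
    rw [show m / I₂ * b * Real.exp b = m * (b * Real.exp b) / I₂ by ring,
      show m / I₁ * a * Real.exp a = m * (a * Real.exp a) / I₁ by ring,
      div_le_div_iff₀ hI₂pos hI₁pos] at this
    exact this
  have hea : 0 < Real.exp a := Real.exp_pos a
  have heM : 0 < Real.exp M := Real.exp_pos M
  have heb' : 0 < Real.exp b := Real.exp_pos b
  have h2 : m * (b * Real.exp b) * I₁ ≤ m * (a * Real.exp a) * (Real.exp M * I₁) :=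
    le_trans h1 (mul_le_mul_of_nonneg_left hI₂le
      (by positivity : (0:ℝ) ≤ m * (a * Real.exp a)))
  have hmI : 0 < m * I₁ := by positivity
  have h3 : b * Real.exp b ≤ a * Real.exp a * Real.exp M := by nlinarith [h2]
  have h4 : b ≤ a := by
    have h5 : b * Real.exp b ≤ a * Real.exp b := by
      calc b * Real.exp b ≤ a * Real.exp a * Real.exp M := h3
        _ = a * Real.exp b := by rw [heb]; ring
    exact le_of_mul_le_mul_right h5 heb'
  rw [hbM] at h4
  linarith

theorem nonlocal_uniqueness {N : ℕ}
    (Ω : Set (EuclideanSpace ℝ (Fin N)))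
    (hΩopen : IsOpen Ω) (hΩbdd : Bornology.IsBounded Ω) (hΩconn : IsConnected Ω)
    (ε m u₀ : ℝ) (hε : 0 < ε) (hm : 0 < m) (hu₀ : 0 < u₀)
    (v₁ v₂ : EuclideanSpace ℝ (Fin N) → ℝ)
    (hv₁_cont : ContinuousOn v₁ (closure Ω)) (hv₂_cont : ContinuousOn v₂ (closure Ω))
    (hv₁_smooth : ContDiffOn ℝ 2 v₁ Ω) (hv₂_smooth : ContDiffOn ℝ 2 v₂ Ω)
    (hv₁_pos : ∀ x ∈ Ω, 0 < v₁ x) (hv₂_pos : ∀ x ∈ Ω, 0 < v₂ x)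
    (heq₁ : ∀ x ∈ Ω, ε ^ 2 * lap v₁ x
      = m / (∫ y in Ω, Real.exp (v₁ y)) * v₁ x * Real.exp (v₁ x))
    (heq₂ : ∀ x ∈ Ω, ε ^ 2 * lap v₂ x
      = m / (∫ y in Ω, Real.exp (v₂ y)) * v₂ x * Real.exp (v₂ x))
    (hbdry₁ : ∀ x ∈ frontier Ω, v₁ x = u₀)
    (hbdry₂ : ∀ x ∈ frontier Ω, v₂ x = u₀) :
    ∀ x ∈ closure Ω, v₁ x = v₂ x := by
  intro x hx
  have h1 := aux_one_side Ω hΩopen hΩbdd hΩconn.nonempty ε m u₀ hε hm hu₀ v₁ v₂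
    hv₁_cont hv₂_cont hv₁_smooth hv₂_smooth hv₁_pos hv₂_pos heq₁ heq₂ hbdry₁ hbdry₂ x hx
  have h2 := aux_one_side Ω hΩopen hΩbdd hΩconn.nonempty ε m u₀ hε hm hu₀ v₂ v₁
    hv₂_cont hv₁_cont hv₂_smooth hv₁_smooth hv₂_pos hv₁_pos heq₂ heq₁ hbdry₂ hbdry₁ x hx
  exact le_antisymm h2 h1
end

section
/- Let λ₁ ≥ λ₂ > 0 and let u_{λᵢ} be the unique solutions of ε²Δu = λᵢ m u e^u in Ω with u = u₀ on ∂Ω, where 0 < u_{λᵢ} ≤ u₀. Then 0 ≤ u_{λ₂} − u_{λ₁} ≤ (λ₁/λ₂ − 1)(1 + (λ₁/λ₂) e^{(λ₁/λ₂) u₀}) u₀ pointwise in Ω. -/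
open Real Set MeasureTheory

section Aux

open Filter

lemma second_deriv_nonpos {g : ℝ → ℝ}
    (hg : ∀ᶠ t in nhds (0:ℝ), DifferentiableAt ℝ g t)
    (hmax : ∀ᶠ t in nhds (0:ℝ), g t ≤ g 0)
    (h2 : DifferentiableAt ℝ (deriv g) 0) :
    deriv (deriv g) 0 ≤ 0 := by
  by_contra hlt
  push_neg at hlt
  have hd0 : deriv g 0 = 0 := IsLocalMax.deriv_eq_zero hmax
  have hda : HasDerivAt (deriv g) (deriv (deriv g) 0) 0 := h2.hasDerivAt
  rw [hasDerivAt_iff_tendsto_slope] at hda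
  have hda' : Tendsto (slope (deriv g) 0) (nhdsWithin 0 (Ioi 0)) (nhds (deriv (deriv g) 0)) :=
    hda.mono_left (nhdsWithin_mono _ (fun t ht => ne_of_gt ht))
  have hpos : ∀ᶠ t in nhdsWithin (0:ℝ) (Ioi 0), 0 < deriv g t := by
    filter_upwards [hda'.eventually (eventually_gt_nhds hlt), self_mem_nhdsWithin] with t ht ht'
    have : slope (deriv g) 0 t = deriv g t / t := by
      rw [slope_def_field, hd0]; ring
    rw [this] at ht
    have := mul_pos ht (show (0:ℝ) < t from ht')
    rwa [div_mul_cancel₀] at this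
    exact ne_of_gt ht'
  rw [eventually_nhdsWithin_iff] at hpos
  have hall := hpos.and (hg.and hmax)
  rw [Metric.eventually_nhds_iff] at hall
  obtain ⟨ε, hε, H⟩ := hall
  have habs : ∀ x : ℝ, x ∈ Icc 0 (ε/2) → dist x 0 < ε := by
    intro x hx
    rw [Real.dist_eq, sub_zero, abs_of_nonneg hx.1]
    linarith [hx.2]
  have hmono : StrictMonoOn g (Icc 0 (ε/2)) := by
    apply strictMonoOn_of_deriv_pos (convex_Icc _ _)
    · exact fun x hx => ((H (habs x hx)).2.1).continuousAt.continuousWithinAt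
    · intro x hx
      rw [interior_Icc] at hx
      exact (H (habs x ⟨le_of_lt hx.1, le_of_lt hx.2⟩)).1 hx.1
  have h1 : g 0 < g (ε/2) :=
    hmono ⟨le_refl _, by linarith⟩ ⟨by linarith, le_refl _⟩ (by linarith)
  have h2' : g (ε/2) ≤ g 0 := (H (habs (ε/2) ⟨by linarith, le_refl _⟩)).2.2
  linarith

variable {N : ℕ}

lemma fderiv_apply_diffAt {v : EuclideanSpace ℝ (Fin N) → ℝ} {U : Set (EuclideanSpace ℝ (Fin N))}
    (hU : IsOpen U) (hv : ContDiffOn ℝ 2 v U) {x : EuclideanSpace ℝ (Fin N)} (hx : x ∈ U)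
    (w : EuclideanSpace ℝ (Fin N)) :
    DifferentiableAt ℝ (fun y => fderiv ℝ v y w) x := by
  have h1 : ContDiffAt ℝ 2 v x := hv.contDiffAt (hU.mem_nhds hx)
  have h2 : ContDiffAt ℝ 1 (fderiv ℝ v) x := h1.fderiv_right (by norm_num)
  exact (h2.differentiableAt one_ne_zero).clm_apply (differentiableAt_const w)

lemma lap_nonpos_at_localmax {v : EuclideanSpace ℝ (Fin N) → ℝ} {U : Set (EuclideanSpace ℝ (Fin N))}
    (hU : IsOpen U) (hv : ContDiffOn ℝ 2 v U) {x₀ : EuclideanSpace ℝ (Fin N)} (hx₀ : x₀ ∈ U)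
    (hmax : ∀ᶠ y in nhds x₀, v y ≤ v x₀) :
    lap v x₀ ≤ 0 := by
  apply Finset.sum_nonpos
  intro i _
  set e : EuclideanSpace ℝ (Fin N) := EuclideanSpace.single i 1 with he
  set ℓ : ℝ → EuclideanSpace ℝ (Fin N) := fun t => x₀ + t • e with hℓ
  have hℓ0 : ℓ 0 = x₀ := by simp [hℓ]
  have hℓd : ∀ t, HasDerivAt ℓ e t := fun t => by
    have := ((hasDerivAt_id t).smul_const e).const_add x₀; rwa [one_smul] at this
  have hℓc : Continuous ℓ := by continuity
  have hℓt : Filter.Tendsto ℓ (nhds 0) (nhds x₀) := by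
    have := hℓc.continuousAt (x := 0); rwa [ContinuousAt, hℓ0] at this
  have hmem : ∀ᶠ t in nhds (0:ℝ), ℓ t ∈ U := hℓt.eventually (hU.eventually_mem hx₀)
  set g : ℝ → ℝ := fun t => v (ℓ t) with hg
  have hderiv : ∀ᶠ t in nhds (0:ℝ), deriv g t = fderiv ℝ v (ℓ t) e := by
    filter_upwards [hmem] with t ht
    have hv' : DifferentiableAt ℝ v (ℓ t) :=
      (hv.contDiffAt (hU.mem_nhds ht)).differentiableAt (by norm_num)
    exact (hv'.hasFDerivAt.comp_hasDerivAt t (hℓd t)).deriv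
  have hgdiff : ∀ᶠ t in nhds (0:ℝ), DifferentiableAt ℝ g t := by
    filter_upwards [hmem] with t ht
    have hv' : DifferentiableAt ℝ v (ℓ t) :=
      (hv.contDiffAt (hU.mem_nhds ht)).differentiableAt (by norm_num)
    exact hv'.comp t (hℓd t).differentiableAt
  have hgmax : ∀ᶠ t in nhds (0:ℝ), g t ≤ g 0 := by
    have := hℓt.eventually hmax
    simpa [hg, hℓ0] using this
  set F : EuclideanSpace ℝ (Fin N) → ℝ := fun y => fderiv ℝ v y e with hF
  have hFd : DifferentiableAt ℝ F x₀ := fderiv_apply_diffAt hU hv hx₀ e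
  have hFd' : DifferentiableAt ℝ F (ℓ 0) := by rwa [hℓ0]
  have hcomp : HasDerivAt (F ∘ ℓ) (fderiv ℝ F (ℓ 0) e) 0 :=
    hFd'.hasFDerivAt.comp_hasDerivAt 0 (hℓd 0)
  have hderiv' : deriv g =ᶠ[nhds (0:ℝ)] (F ∘ ℓ) := hderiv
  have h2 : DifferentiableAt ℝ (deriv g) 0 :=
    hcomp.differentiableAt.congr_of_eventuallyEq hderiv'
  have key : deriv (deriv g) 0 = fderiv ℝ F x₀ e := by
    rw [hderiv'.deriv_eq, hcomp.deriv, hℓ0]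
  have := second_deriv_nonpos hgdiff hgmax h2
  rw [key] at this
  exact this

lemma lap_combo {f g : EuclideanSpace ℝ (Fin N) → ℝ} {s : Set (EuclideanSpace ℝ (Fin N))}
    (hs : IsOpen s) (hf : ContDiffOn ℝ 2 f s) (hg : ContDiffOn ℝ 2 g s)
    (a b : ℝ) {x : EuclideanSpace ℝ (Fin N)} (hx : x ∈ s) :
    lap (fun y => a * f y + b * g y) x = a * lap f x + b * lap g x := by
  unfold lap
  rw [Finset.mul_sum, Finset.mul_sum, ← Finset.sum_add_distrib]
  apply Finset.sum_congr rfl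
  intro i _
  set e := EuclideanSpace.single i (1:ℝ) with he
  have hev : (fun y => fderiv ℝ (fun z => a * f z + b * g z) y e)
      =ᶠ[nhds x] (fun y => a * fderiv ℝ f y e + b * fderiv ℝ g y e) := by
    filter_upwards [hs.mem_nhds hx] with y hy
    have hfd : DifferentiableAt ℝ f y :=
      (hf.contDiffAt (hs.mem_nhds hy)).differentiableAt (by norm_num)
    have hgd : DifferentiableAt ℝ g y :=
      (hg.contDiffAt (hs.mem_nhds hy)).differentiableAt (by norm_num)
    rw [HasFDerivAt.fderiv (f := fun z => a * f z + b * g z) ((hfd.hasFDerivAt.const_mul a).add (hgd.hasFDerivAt.const_mul b))]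
    simp
  rw [hev.fderiv_eq]
  have h1 := fderiv_apply_diffAt hs hf hx e
  have h2 := fderiv_apply_diffAt hs hg hx e
  rw [HasFDerivAt.fderiv (f := fun y => a * fderiv ℝ f y e + b * fderiv ℝ g y e) ((h1.hasFDerivAt.const_mul a).add (h2.hasFDerivAt.const_mul b))]
  simp

lemma lap_sq (i₀ : Fin N) (x : EuclideanSpace ℝ (Fin N)) :
    lap (fun y => (EuclideanSpace.proj i₀ y) * (EuclideanSpace.proj i₀ y)) x = 2 := by
  have hP : ∀ z : EuclideanSpace ℝ (Fin N),
      HasFDerivAt (fun y : EuclideanSpace ℝ (Fin N) => (EuclideanSpace.proj i₀ : EuclideanSpace ℝ (Fin N) →L[ℝ] ℝ) y)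
        (EuclideanSpace.proj i₀ : EuclideanSpace ℝ (Fin N) →L[ℝ] ℝ) z :=
    fun z => (EuclideanSpace.proj i₀ : EuclideanSpace ℝ (Fin N) →L[ℝ] ℝ).hasFDerivAt
  unfold lap
  have key : ∀ (z w : EuclideanSpace ℝ (Fin N)),
      fderiv ℝ (fun y => (EuclideanSpace.proj i₀ y) * (EuclideanSpace.proj i₀ y)) z w
        = 2 * EuclideanSpace.proj i₀ z * EuclideanSpace.proj i₀ w := by
    intro z w
    rw [HasFDerivAt.fderiv (f := fun y => (EuclideanSpace.proj i₀ y) * (EuclideanSpace.proj i₀ y)) ((hP z).mul (hP z))]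
    simp; ring
  have key2 : ∀ i : Fin N,
      fderiv ℝ (fun y => fderiv ℝ (fun y => (EuclideanSpace.proj i₀ y) * (EuclideanSpace.proj i₀ y)) y
        (EuclideanSpace.single i 1)) x (EuclideanSpace.single i 1)
      = 2 * (EuclideanSpace.proj i₀ (EuclideanSpace.single i 1)) ^ 2 := by
    intro i
    have heq : (fun y : EuclideanSpace ℝ (Fin N) => fderiv ℝ (fun y => (EuclideanSpace.proj i₀ y) * (EuclideanSpace.proj i₀ y)) y
        (EuclideanSpace.single i 1))
        = fun y : EuclideanSpace ℝ (Fin N) => (2 * EuclideanSpace.proj i₀ (EuclideanSpace.single i 1)) * EuclideanSpace.proj i₀ y := by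
      funext y; rw [key]; ring
    rw [heq]
    rw [((hP x).const_mul _).fderiv]
    simp
    split_ifs with h <;> simp [h, EuclideanSpace.single_apply]
  rw [Finset.sum_congr rfl (fun i _ => key2 i)]
  have hproj : ∀ i : Fin N, EuclideanSpace.proj i₀ (EuclideanSpace.single i (1:ℝ)) = if i = i₀ then 1 else 0 := by
    intro i; simp [EuclideanSpace.single_apply, eq_comm]
  rw [Finset.sum_congr rfl (fun i _ => by rw [hproj i])]
  simp

lemma max_principle {v : EuclideanSpace ℝ (Fin N) → ℝ} {U : Set (EuclideanSpace ℝ (Fin N))}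
    (hU : IsOpen U) (hUb : Bornology.IsBounded U)
    (hvc : ContinuousOn v (closure U)) (hv : ContDiffOn ℝ 2 v U)
    (hlap : ∀ x ∈ U, 0 ≤ lap v x) (i₀ : Fin N)
    {b : ℝ} (hb : ∀ y ∈ frontier U, v y ≤ b) :
    ∀ x ∈ U, v x ≤ b := by
  intro x hx
  set φ : EuclideanSpace ℝ (Fin N) → ℝ :=
    fun y => (EuclideanSpace.proj i₀ y) * (EuclideanSpace.proj i₀ y) with hφ
  have hφc : ContDiff ℝ 2 φ :=
    ((EuclideanSpace.proj i₀ : EuclideanSpace ℝ (Fin N) →L[ℝ] ℝ).contDiff.mul (EuclideanSpace.proj i₀ : EuclideanSpace ℝ (Fin N) →L[ℝ] ℝ).contDiff)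
  have hφnonneg : ∀ y, 0 ≤ φ y := fun y => mul_self_nonneg _
  obtain ⟨R, hR⟩ := hUb.subset_closedBall 0
  have hclball : closure U ⊆ Metric.closedBall 0 R :=
    closure_minimal hR Metric.isClosed_closedBall
  have hφbdd : ∀ y ∈ closure U, φ y ≤ R ^ 2 := by
    intro y hy
    have hyR : ‖y‖ ≤ R := by
      have := hclball hy; rwa [Metric.mem_closedBall, dist_zero_right] at this
    have habs : |EuclideanSpace.proj i₀ y| ≤ ‖y‖ := by
      have h := abs_real_inner_le_norm (EuclideanSpace.single i₀ (1:ℝ)) y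
      rw [EuclideanSpace.inner_single_left, EuclideanSpace.norm_single] at h
      simpa using h
    have : φ y = |EuclideanSpace.proj i₀ y| * |EuclideanSpace.proj i₀ y| := by
      rw [abs_mul_abs_self]
    rw [this, sq]
    have h0 : (0:ℝ) ≤ |EuclideanSpace.proj i₀ y| := abs_nonneg _
    nlinarith [norm_nonneg y]
  have key : ∀ δ : ℝ, 0 < δ → v x ≤ b + δ * R ^ 2 := by
    intro δ hδ
    set w : EuclideanSpace ℝ (Fin N) → ℝ := fun y => 1 * v y + δ * φ y with hw
    have hwc : ContinuousOn w (closure U) :=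
      (continuousOn_const.mul hvc).add (continuousOn_const.mul hφc.continuous.continuousOn)
    have hwcd : ContDiffOn ℝ 2 w U :=
      (contDiffOn_const.mul hv).add (contDiffOn_const.mul hφc.contDiffOn)
    have hlapw : ∀ z ∈ U, 0 < lap w z := by
      intro z hz
      rw [hw, lap_combo hU hv hφc.contDiffOn 1 δ hz, lap_sq]
      have := hlap z hz; nlinarith
    have hccl : IsCompact (closure U) :=
      Metric.isCompact_of_isClosed_isBounded isClosed_closure hUb.closure
    obtain ⟨z, hzmem, hzmax⟩ := hccl.exists_isMaxOn ⟨x, subset_closure hx⟩ hwc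
    have hznotU : z ∉ U := by
      intro hzU
      have hloc : ∀ᶠ y in nhds z, w y ≤ w z := by
        filter_upwards [hU.mem_nhds hzU] with y hy
        exact hzmax (subset_closure hy)
      exact absurd (lap_nonpos_at_localmax hU hwcd hzU hloc) (not_le.mpr (hlapw z hzU))
    have hzfr : z ∈ frontier U := by
      rw [frontier, hU.interior_eq]; exact ⟨hzmem, hznotU⟩
    have h1 : w x ≤ w z := hzmax (subset_closure hx)
    have h2 : w z ≤ b + δ * R ^ 2 := by
      have hb' := hb z hzfr
      have hφ' := hφbdd z hzmem
      simp only [hw, one_mul]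
      nlinarith
    have h3 : v x ≤ w x := by
      simp only [hw, one_mul]; nlinarith [hφnonneg x]
    linarith
  have hfin : ∀ ε : ℝ, 0 < ε → v x ≤ b + ε := by
    intro ε hε
    have hR2 : (0:ℝ) ≤ R ^ 2 := sq_nonneg R
    have hδ : 0 < ε / (R ^ 2 + 1) := by positivity
    have h := key _ hδ
    have hle : ε / (R ^ 2 + 1) * R ^ 2 ≤ ε := by
      rw [div_mul_eq_mul_div, div_le_iff₀ (by positivity)]; nlinarith
    linarith
  exact le_of_forall_pos_le_add hfin

end Aux

theorem auxiliary_solutions_comparison {N : ℕ}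
    (Ω : Set (EuclideanSpace ℝ (Fin N)))
    (hΩopen : IsOpen Ω) (hΩbdd : Bornology.IsBounded Ω) (hΩconn : IsConnected Ω)
    (ε m u₀ lam₁ lam₂ : ℝ) (hε : 0 < ε) (hm : 0 < m) (hu₀ : 0 < u₀)
    (hlam₂ : 0 < lam₂) (hlam : lam₂ ≤ lam₁)
    (u₁ u₂ : EuclideanSpace ℝ (Fin N) → ℝ)
    (hu₁_cont : ContinuousOn u₁ (closure Ω)) (hu₂_cont : ContinuousOn u₂ (closure Ω))
    (hu₁_smooth : ContDiffOn ℝ 2 u₁ Ω) (hu₂_smooth : ContDiffOn ℝ 2 u₂ Ω)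
    (hu₁_bdd : ∀ x ∈ Ω, 0 < u₁ x ∧ u₁ x ≤ u₀)
    (hu₂_bdd : ∀ x ∈ Ω, 0 < u₂ x ∧ u₂ x ≤ u₀)
    (heq₁ : ∀ x ∈ Ω, ε ^ 2 * lap u₁ x = lam₁ * m * u₁ x * Real.exp (u₁ x))
    (heq₂ : ∀ x ∈ Ω, ε ^ 2 * lap u₂ x = lam₂ * m * u₂ x * Real.exp (u₂ x))
    (hbdry₁ : ∀ x ∈ frontier Ω, u₁ x = u₀)
    (hbdry₂ : ∀ x ∈ frontier Ω, u₂ x = u₀) :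
    ∀ x ∈ Ω, 0 ≤ u₂ x - u₁ x ∧
      u₂ x - u₁ x ≤ (lam₁ / lam₂ - 1) * (1 + lam₁ / lam₂ * Real.exp (lam₁ / lam₂ * u₀)) * u₀ := by
  have hlam₁ : 0 < lam₁ := lt_of_lt_of_le hlam₂ hlam
  rcases Nat.eq_zero_or_pos N with hN | hN
  · -- N = 0 : the equation is contradictory
    intro x hx
    exfalso
    have h1 := heq₁ x hx
    have h0 : lap u₁ x = 0 := by
      unfold lap
      subst hN
      simp
    rw [h0, mul_zero] at h1
    have hpos : 0 < lam₁ * m * u₁ x * Real.exp (u₁ x) := by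
      have hb := (hu₁_bdd x hx).1
      have he := Real.exp_pos (u₁ x)
      positivity
    linarith
  · obtain ⟨i₀⟩ : Nonempty (Fin N) := ⟨⟨0, hN⟩⟩
    have hclfr : closure Ω \ Ω ⊆ frontier Ω := by
      intro y hy
      rw [frontier, hΩopen.interior_eq]
      exact hy
    -- Step A : u₁ ≤ u₂ on Ω
    set v : EuclideanSpace ℝ (Fin N) → ℝ := fun y => 1 * u₁ y + (-1) * u₂ y with hv
    have hvcd : ContDiffOn ℝ 2 v Ω :=
      (contDiffOn_const.mul hu₁_smooth).add (contDiffOn_const.mul hu₂_smooth)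
    have hvc : ContinuousOn v (closure Ω) :=
      (continuousOn_const.mul hu₁_cont).add (continuousOn_const.mul hu₂_cont)
    set U : Set (EuclideanSpace ℝ (Fin N)) := Ω ∩ v ⁻¹' (Ioi 0) with hUdef
    have hUopen : IsOpen U :=
      (hvcd.continuousOn).isOpen_inter_preimage hΩopen isOpen_Ioi
    have hUsub : U ⊆ Ω := inter_subset_left
    have hUcl : closure U ⊆ closure Ω := closure_mono hUsub
    have hlapv : ∀ y ∈ U, 0 ≤ lap v y := by
      intro y hy
      have hyΩ : y ∈ Ω := hUsub hy
      have hyv : (0:ℝ) < v y := hy.2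
      have h12 : u₂ y < u₁ y := by
        simp only [hv] at hyv; linarith
      have hb1 := hu₁_bdd y hyΩ
      have hb2 := hu₂_bdd y hyΩ
      have hex1 : 0 < Real.exp (u₁ y) := Real.exp_pos _
      have hex2 : 0 < Real.exp (u₂ y) := Real.exp_pos _
      have he12 : Real.exp (u₂ y) ≤ Real.exp (u₁ y) := Real.exp_le_exp.mpr h12.le
      have h1 := heq₁ y hyΩ
      have h2 := heq₂ y hyΩ
      have k1 : lam₂ * m * u₂ y * Real.exp (u₂ y) ≤ lam₁ * m * u₂ y * Real.exp (u₂ y) := by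
        apply mul_le_mul_of_nonneg_right _ hex2.le
        apply mul_le_mul_of_nonneg_right _ hb2.1.le
        exact mul_le_mul_of_nonneg_right hlam hm.le
      have k2 : lam₁ * m * u₂ y * Real.exp (u₂ y) ≤ lam₁ * m * u₁ y * Real.exp (u₂ y) := by
        apply mul_le_mul_of_nonneg_right _ hex2.le
        exact mul_le_mul_of_nonneg_left h12.le (mul_pos hlam₁ hm).le
      have k3 : lam₁ * m * u₁ y * Real.exp (u₂ y) ≤ lam₁ * m * u₁ y * Real.exp (u₁ y) :=
        mul_le_mul_of_nonneg_left he12 (mul_pos (mul_pos hlam₁ hm) hb1.1).le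
      have hE : 0 ≤ ε ^ 2 * lap v y := by
        rw [hv, lap_combo hΩopen hu₁_smooth hu₂_smooth 1 (-1) hyΩ]
        have hexp : ε ^ 2 * (1 * lap u₁ y + (-1) * lap u₂ y)
            = ε ^ 2 * lap u₁ y - ε ^ 2 * lap u₂ y := by ring
        rw [hexp, h1, h2]
        linarith
      by_contra hcon2
      push_neg at hcon2
      have : ε ^ 2 * lap v y < 0 := mul_neg_of_pos_of_neg (by positivity) hcon2
      linarith
    have hbv : ∀ y ∈ frontier U, v y ≤ 0 := by
      intro y hy
      have hycl : y ∈ closure U := hy.1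
      have hynotU : y ∉ U := by
        rw [frontier, hUopen.interior_eq] at hy; exact hy.2
      by_cases hyΩ : y ∈ Ω
      · by_contra hvy
        push_neg at hvy
        exact hynotU ⟨hyΩ, hvy⟩
      · have hyfr : y ∈ frontier Ω := hclfr ⟨hUcl hycl, hyΩ⟩
        have e1 := hbdry₁ y hyfr
        have e2 := hbdry₂ y hyfr
        simp only [hv]
        have h00 : 1 * u₀ + (-1) * u₀ = (0:ℝ) := by ring
        rw [e1, e2, h00]
    have hstepA : ∀ z ∈ Ω, u₁ z ≤ u₂ z := by
      intro z hz
      by_contra hcon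
      push_neg at hcon
      have hzU : z ∈ U := ⟨hz, show (0:ℝ) < v z by simp only [hv]; linarith⟩
      have := max_principle hUopen (hΩbdd.subset hUsub) (hvc.mono hUcl)
        (hvcd.mono hUsub) hlapv i₀ hbv z hzU
      have h0 : (0:ℝ) < v z := hzU.2
      linarith
    -- Step B
    set ρ : ℝ := lam₁ / lam₂ with hρdef
    have hρ1 : 1 ≤ ρ := (one_le_div hlam₂).mpr hlam
    have hρlam : ρ * lam₂ = lam₁ := div_mul_cancel₀ _ (ne_of_gt hlam₂)
    set w : EuclideanSpace ℝ (Fin N) → ℝ := fun y => ρ * u₂ y + (-1) * u₁ y with hw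
    have hwcd : ContDiffOn ℝ 2 w Ω :=
      (contDiffOn_const.mul hu₂_smooth).add (contDiffOn_const.mul hu₁_smooth)
    have hwc : ContinuousOn w (closure Ω) :=
      (continuousOn_const.mul hu₂_cont).add (continuousOn_const.mul hu₁_cont)
    have hlapw : ∀ y ∈ Ω, 0 ≤ lap w y := by
      intro y hyΩ
      have h1 := heq₁ y hyΩ
      have h2 := heq₂ y hyΩ
      have hb1 := hu₁_bdd y hyΩ
      have hb2 := hu₂_bdd y hyΩ
      have h12 : u₁ y ≤ u₂ y := hstepA y hyΩ
      have hex1 : 0 < Real.exp (u₁ y) := Real.exp_pos _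
      have hex2 : 0 < Real.exp (u₂ y) := Real.exp_pos _
      have he12 : Real.exp (u₁ y) ≤ Real.exp (u₂ y) := Real.exp_le_exp.mpr h12
      have k2 : lam₁ * m * u₁ y * Real.exp (u₁ y) ≤ lam₁ * m * u₂ y * Real.exp (u₁ y) := by
        apply mul_le_mul_of_nonneg_right _ hex1.le
        exact mul_le_mul_of_nonneg_left h12 (mul_pos hlam₁ hm).le
      have k3 : lam₁ * m * u₂ y * Real.exp (u₁ y) ≤ lam₁ * m * u₂ y * Real.exp (u₂ y) :=
        mul_le_mul_of_nonneg_left he12 (mul_pos (mul_pos hlam₁ hm) hb2.1).le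
      have hE : 0 ≤ ε ^ 2 * lap w y := by
        rw [hw, lap_combo hΩopen hu₂_smooth hu₁_smooth ρ (-1) hyΩ]
        have hexp : ε ^ 2 * (ρ * lap u₂ y + (-1) * lap u₁ y)
            = ρ * (ε ^ 2 * lap u₂ y) - ε ^ 2 * lap u₁ y := by ring
        rw [hexp, h1, h2]
        have hrl : ρ * (lam₂ * m * u₂ y * Real.exp (u₂ y))
            = lam₁ * m * u₂ y * Real.exp (u₂ y) := by
          rw [← hρlam]; ring
        rw [hrl]
        linarith
      by_contra hcon2
      push_neg at hcon2
      have : ε ^ 2 * lap w y < 0 := mul_neg_of_pos_of_neg (by positivity) hcon2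
      linarith
    have hbw : ∀ y ∈ frontier Ω, w y ≤ (ρ - 1) * u₀ := by
      intro y hy
      have e1 := hbdry₁ y hy
      have e2 := hbdry₂ y hy
      simp only [hw]
      have h00 : ρ * u₀ + (-1) * u₀ = (ρ - 1) * u₀ := by ring
      rw [e1, e2, h00]
    have hstepB : ∀ z ∈ Ω, w z ≤ (ρ - 1) * u₀ :=
      max_principle hΩopen hΩbdd hwc hwcd hlapw i₀ hbw
    -- conclude
    intro x hx
    have hA := hstepA x hx
    have hB := hstepB x hx
    have hb2 := (hu₂_bdd x hx).1
    simp only [hw] at hB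
    refine ⟨by linarith, ?_⟩
    have h1 : u₂ x - u₁ x ≤ (ρ - 1) * u₀ := by nlinarith
    have h2 : (ρ - 1) * u₀ ≤ (ρ - 1) * (1 + ρ * Real.exp (ρ * u₀)) * u₀ := by
      have hexp : 0 < Real.exp (ρ * u₀) := Real.exp_pos _
      have hnn : 0 ≤ (ρ - 1) * (ρ * Real.exp (ρ * u₀)) * u₀ :=
        mul_nonneg (mul_nonneg (by linarith) (mul_nonneg (by linarith) hexp.le)) hu₀.le
      nlinarith [hnn]
    calc u₂ x - u₁ x ≤ (ρ - 1) * u₀ := h1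
      _ ≤ (ρ - 1) * (1 + ρ * Real.exp (ρ * u₀)) * u₀ := h2
end

section
/- Let ψ : [0,R] → (0, u₀] be continuous with 0 < ψ(r) ≤ C₁ e^{−(M₁/ε)(R−r)} for constants C₁, M₁ > 0. Then |(N/R^N) ∫₀^R e^{ψ(s)} s^{N−1} ds − 1| ≤ (N (e^{u₀} − 1) C₁ / (R u₀ M₁)) ε. -/
open Real Set intervalIntegral

lemma exp_sub_one_le_aux (u₀ t : ℝ) (hu : 0 < u₀) (ht0 : 0 ≤ t) (ht : t ≤ u₀) :
    Real.exp t - 1 ≤ (Real.exp u₀ - 1) / u₀ * t := by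
  have ha : (0:ℝ) ≤ 1 - t / u₀ := by
    have : t / u₀ ≤ 1 := (div_le_one hu).2 ht; linarith
  have hb : (0:ℝ) ≤ t / u₀ := by positivity
  have h : Real.exp ((1 - t / u₀) • (0:ℝ) + (t / u₀) • u₀)
      ≤ (1 - t / u₀) • Real.exp 0 + (t / u₀) • Real.exp u₀ :=
    convexOn_exp.2 (Set.mem_univ (0:ℝ)) (Set.mem_univ u₀) ha hb (by ring)
  have hne : u₀ ≠ 0 := hu.ne'
  simp only [smul_eq_mul, mul_zero, zero_add, Real.exp_zero, mul_one] at h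
  rw [div_mul_cancel₀ _ hne] at h
  have : Real.exp t ≤ 1 - t / u₀ + t / u₀ * Real.exp u₀ := by linarith
  have h2 : Real.exp t - 1 ≤ t / u₀ * (Real.exp u₀ - 1) := by ring_nf; ring_nf at this; linarith
  calc Real.exp t - 1 ≤ t / u₀ * (Real.exp u₀ - 1) := h2
    _ = (Real.exp u₀ - 1) / u₀ * t := by ring

lemma exp_linear_integral (c R : ℝ) (hc : c ≠ 0) :
    ∫ s in (0:ℝ)..R, Real.exp (c * s - c * R) =
      (1 - Real.exp (-(c * R))) / c := by
  have : (fun s : ℝ => Real.exp (c * s - c * R))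
      = fun s => Real.exp (-(c * R)) * Real.exp (c * s) := by
    funext s; rw [← Real.exp_add]; ring_nf
  rw [this, intervalIntegral.integral_const_mul,
    intervalIntegral.integral_comp_mul_left (fun x => Real.exp x) hc,
    integral_exp]
  field_simp [Real.exp_neg]
  simp only [smul_eq_mul, mul_zero, Real.exp_zero]
  have key : Real.exp (-(c * R)) * Real.exp (c * R) = 1 := by rw [← Real.exp_add]; simp
  rw [← mul_assoc, show c * Real.exp (-(c * R)) * (1 / c) = Real.exp (-(c * R)) by
    rw [mul_comm c, mul_assoc, mul_one_div_cancel hc, mul_one]]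
  linear_combination key

theorem nonlocal_coefficient_estimate
    (N : ℕ) (hN : 1 ≤ N) (R u₀ ε C₁ M₁ : ℝ) (hR : 0 < R) (hu₀ : 0 < u₀)
    (hε : 0 < ε) (hC₁ : 0 < C₁) (hM₁ : 0 < M₁)
    (ψ : ℝ → ℝ) (hψ_cont : ContinuousOn ψ (Set.Icc 0 R))
    (hψ_bdd : ∀ r ∈ Set.Icc (0 : ℝ) R, 0 < ψ r ∧ ψ r ≤ u₀)
    (hψ_decay : ∀ r ∈ Set.Icc (0 : ℝ) R, ψ r ≤ C₁ * Real.exp (-(M₁ / ε) * (R - r))) :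
    |(N : ℝ) / R ^ N * (∫ s in (0:ℝ)..R, Real.exp (ψ s) * s ^ (N - 1)) - 1|
      ≤ (N : ℝ) * (Real.exp u₀ - 1) * C₁ / (R * u₀ * M₁) * ε := by
  set c : ℝ := M₁ / ε with hcdef
  have hc : 0 < c := div_pos hM₁ hε
  set K : ℝ := (Real.exp u₀ - 1) / u₀ with hKdef
  have hK : 0 ≤ K := by
    apply div_nonneg _ hu₀.le
    have := Real.exp_pos u₀
    nlinarith [Real.one_le_exp hu₀.le]
  have hu : Set.uIcc (0:ℝ) R = Set.Icc 0 R := Set.uIcc_of_le hR.le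
  -- integrability facts
  have hint1 : IntervalIntegrable (fun s => Real.exp (ψ s) * s ^ (N - 1)) MeasureTheory.volume 0 R := by
    apply ContinuousOn.intervalIntegrable
    rw [hu]
    exact (Real.continuous_exp.comp_continuousOn hψ_cont).mul (continuous_pow _).continuousOn
  have hint2 : IntervalIntegrable (fun s : ℝ => s ^ (N - 1)) MeasureTheory.volume 0 R :=
    (continuous_pow _).intervalIntegrable _ _
  have hint3 : IntervalIntegrable (fun s => (Real.exp (ψ s) - 1) * s ^ (N - 1)) MeasureTheory.volume 0 R := by
    apply ContinuousOn.intervalIntegrable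
    rw [hu]
    exact ((Real.continuous_exp.comp_continuousOn hψ_cont).sub continuousOn_const).mul
      (continuous_pow _).continuousOn
  have hint4 : IntervalIntegrable (fun s => K * C₁ * R ^ (N - 1) * Real.exp (c * s - c * R)) MeasureTheory.volume 0 R := by
    apply Continuous.intervalIntegrable
    exact continuous_const.mul (Real.continuous_exp.comp (by continuity))
  -- value of the power integral
  have hpow : ∫ s in (0:ℝ)..R, s ^ (N - 1) = R ^ N / N := by
    rw [integral_pow]
    obtain ⟨m, rfl⟩ := Nat.exists_eq_succ_of_ne_zero (by omega : N ≠ 0)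
    simp only [Nat.succ_sub_one]
    rw [zero_pow (by omega)]
    push_cast
    rw [pow_succ]
    ring
  have hRN : (0:ℝ) < R ^ N := pow_pos hR N
  have hNpos : (0:ℝ) < N := by exact_mod_cast hN
  -- rewrite the main expression
  have key : (N : ℝ) / R ^ N * (∫ s in (0:ℝ)..R, Real.exp (ψ s) * s ^ (N - 1)) - 1
      = (N : ℝ) / R ^ N * ∫ s in (0:ℝ)..R, (Real.exp (ψ s) - 1) * s ^ (N - 1) := by
    have hsplit : ∫ s in (0:ℝ)..R, (Real.exp (ψ s) - 1) * s ^ (N - 1)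
        = (∫ s in (0:ℝ)..R, Real.exp (ψ s) * s ^ (N - 1)) - ∫ s in (0:ℝ)..R, s ^ (N - 1) := by
      rw [← intervalIntegral.integral_sub hint1 hint2]
      congr 1; funext s; ring
    rw [hsplit, hpow, mul_sub]
    have : (N : ℝ) / R ^ N * (R ^ N / N) = 1 := by
      field_simp
    rw [this]
  rw [key]
  set I := ∫ s in (0:ℝ)..R, (Real.exp (ψ s) - 1) * s ^ (N - 1) with hI
  have hInonneg : 0 ≤ I := by
    apply intervalIntegral.integral_nonneg hR.le
    intro s hs
    have h1 := (hψ_bdd s hs).1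
    have : (1:ℝ) ≤ Real.exp (ψ s) := Real.one_le_exp h1.le
    have hs0 : 0 ≤ s := hs.1
    exact mul_nonneg (by linarith) (pow_nonneg hs0 _)
  rw [abs_of_nonneg (mul_nonneg (div_nonneg (Nat.cast_nonneg N) hRN.le) hInonneg)]
  -- pointwise bound and integral comparison
  have hmono : I ≤ ∫ s in (0:ℝ)..R, K * C₁ * R ^ (N - 1) * Real.exp (c * s - c * R) := by
    apply intervalIntegral.integral_mono_on hR.le hint3 hint4
    intro s hs
    obtain ⟨hψpos, hψle⟩ := hψ_bdd s hs
    have h1 : Real.exp (ψ s) - 1 ≤ K * ψ s := exp_sub_one_le_aux u₀ (ψ s) hu₀ hψpos.le hψle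
    have h2 : ψ s ≤ C₁ * Real.exp (c * s - c * R) := by
      have := hψ_decay s hs
      convert this using 2
      ring
    have hsR : s ^ (N - 1) ≤ R ^ (N - 1) := pow_le_pow_left₀ hs.1 hs.2 _
    have hs0 : (0:ℝ) ≤ s ^ (N - 1) := pow_nonneg hs.1 _
    calc (Real.exp (ψ s) - 1) * s ^ (N - 1) ≤ K * ψ s * s ^ (N - 1) := by
          apply mul_le_mul_of_nonneg_right h1 hs0
      _ ≤ K * (C₁ * Real.exp (c * s - c * R)) * R ^ (N - 1) := by
          apply mul_le_mul
          · exact mul_le_mul_of_nonneg_left h2 hK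
          · exact hsR
          · exact hs0
          · exact mul_nonneg hK (by positivity)
      _ = K * C₁ * R ^ (N - 1) * Real.exp (c * s - c * R) := by ring
  have hval : ∫ s in (0:ℝ)..R, K * C₁ * R ^ (N - 1) * Real.exp (c * s - c * R)
      = K * C₁ * R ^ (N - 1) * ((1 - Real.exp (-(c * R))) / c) := by
    rw [intervalIntegral.integral_const_mul, exp_linear_integral c R hc.ne']
  have hIle : I ≤ K * C₁ * R ^ (N - 1) * (1 / c) := by
    refine le_trans hmono ?_
    rw [hval]
    apply mul_le_mul_of_nonneg_left _ (mul_nonneg (mul_nonneg hK hC₁.le) (pow_nonneg hR.le _))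
    have h1 : 1 - Real.exp (-(c * R)) ≤ 1 := by linarith [Real.exp_pos (-(c * R))]
    exact (div_le_div_iff_of_pos_right hc).2 h1
  have hRpow : R ^ N = R ^ (N - 1) * R := by
    rw [← pow_succ]
    congr 1
    omega
  calc (N : ℝ) / R ^ N * I ≤ (N : ℝ) / R ^ N * (K * C₁ * R ^ (N - 1) * (1 / c)) :=
        mul_le_mul_of_nonneg_left hIle (div_nonneg (Nat.cast_nonneg N) hRN.le)
    _ = (N : ℝ) * (Real.exp u₀ - 1) * C₁ / (R * u₀ * M₁) * ε := by
        rw [hKdef, hcdef, hRpow]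
        have hR1 : (0:ℝ) < R ^ (N - 1) := pow_pos hR _
        field_simp
end

section
/- The ODE problem −Ψ'(ξ) = √(2m F(Ψ(ξ))) for ξ > 0 with Ψ(0) = u₀ > 0, where F(s) = (s−1)e^s + 1 and m > 0, has at most one positive decreasing solution Ψ with Ψ(ξ) → 0 as ξ → ∞. -/
open Real Set Filter

lemma Fa_hasDeriv (s : ℝ) : HasDerivAt Fa (s * Real.exp s) s := by
  have h : HasDerivAt (fun s : ℝ => (s - 1) * Real.exp s + 1)
      (1 * Real.exp s + (s - 1) * Real.exp s) s := by
    exact (((hasDerivAt_id s).sub_const 1).mul (Real.hasDerivAt_exp s)).add_const 1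
  refine h.congr_deriv ?_
  ring

lemma Fa_mono : MonotoneOn Fa (Set.Ici 0) := by
  apply monotoneOn_of_deriv_nonneg (convex_Ici 0)
  · exact fun x _ => (Fa_hasDeriv x).continuousAt.continuousWithinAt
  · exact fun x _ => (Fa_hasDeriv x).differentiableAt.differentiableWithinAt
  · intro x hx
    rw [interior_Ici] at hx
    rw [(Fa_hasDeriv x).deriv]
    exact mul_nonneg hx.le (Real.exp_pos x).le

lemma Fa_ge (s : ℝ) (hs : 0 ≤ s) : s ^ 2 / 2 ≤ Fa s := by
  have hmono : MonotoneOn (fun s => Fa s - s ^ 2 / 2) (Set.Ici 0) := by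
    apply monotoneOn_of_deriv_nonneg (convex_Ici 0)
    · exact fun x _ => ((Fa_hasDeriv x).sub (by simpa using
        ((hasDerivAt_pow 2 x).div_const 2))).continuousAt.continuousWithinAt
    · exact fun x _ => ((Fa_hasDeriv x).sub (by simpa using
        ((hasDerivAt_pow 2 x).div_const 2))).differentiableAt.differentiableWithinAt
    · intro x hx
      rw [interior_Ici] at hx
      have hd : HasDerivAt (fun s => Fa s - s ^ 2 / 2) (x * Real.exp x - x) x := by
        have := (Fa_hasDeriv x).sub ((hasDerivAt_pow 2 x).div_const 2)
        refine this.congr_deriv ?_; push_cast; ring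
      rw [hd.deriv]
      have : 1 ≤ Real.exp x := by
        rw [← Real.exp_zero]; exact Real.exp_le_exp.2 hx.le
      nlinarith [mul_nonneg hx.le (sub_nonneg.2 this)]
  have := hmono (self_mem_Ici) hs hs
  simp only [Fa] at this ⊢
  norm_num at this
  linarith [this]

lemma Fa_diff_le (c a b : ℝ) (hb : 0 ≤ b) (hba : b ≤ a) (hac : a ≤ c) :
    Fa a - Fa b ≤ Real.exp c * (a ^ 2 - b ^ 2) / 2 := by
  have hmono : MonotoneOn (fun s => Real.exp c * s ^ 2 / 2 - Fa s) (Set.Icc 0 c) := by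
    apply monotoneOn_of_deriv_nonneg (convex_Icc 0 c)
    · intro x _
      have hd : HasDerivAt (fun s => Real.exp c * s ^ 2 / 2 - Fa s)
          (Real.exp c * x - x * Real.exp x) x := by
        have := (((hasDerivAt_pow 2 x).const_mul (Real.exp c)).div_const 2).sub (Fa_hasDeriv x)
        refine this.congr_deriv ?_; push_cast; ring
      exact hd.continuousAt.continuousWithinAt
    · intro x _
      have hd : HasDerivAt (fun s => Real.exp c * s ^ 2 / 2 - Fa s)
          (Real.exp c * x - x * Real.exp x) x := by
        have := (((hasDerivAt_pow 2 x).const_mul (Real.exp c)).div_const 2).sub (Fa_hasDeriv x)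
        refine this.congr_deriv ?_; push_cast; ring
      exact hd.differentiableAt.differentiableWithinAt
    · intro x hx
      rw [interior_Icc] at hx
      have hd : HasDerivAt (fun s => Real.exp c * s ^ 2 / 2 - Fa s)
          (Real.exp c * x - x * Real.exp x) x := by
        have := (((hasDerivAt_pow 2 x).const_mul (Real.exp c)).div_const 2).sub (Fa_hasDeriv x)
        refine this.congr_deriv ?_; push_cast; ring
      rw [hd.deriv]
      have h1 : Real.exp x ≤ Real.exp c := Real.exp_le_exp.2 hx.2.le
      nlinarith [hx.1.le]
  have h := hmono ⟨hb, hba.trans hac⟩ ⟨hb.trans hba, hac⟩ hba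
  dsimp at h
  linarith

lemma Fa_nonneg (s : ℝ) (hs : 0 ≤ s) : 0 ≤ Fa s := le_trans (by positivity) (Fa_ge s hs)

lemma sqrt_key (m c : ℝ) (hm : 0 < m) (a b : ℝ) (hb : 0 ≤ b) (hba : b ≤ a) (hac : a ≤ c) :
    Real.sqrt (2*m*Fa a) - Real.sqrt (2*m*Fa b) ≤ Real.sqrt m * Real.exp c * (a - b) := by
  rcases eq_or_lt_of_le (hb.trans hba) with h0 | h0
  · have ha0 : a = 0 := h0.symm
    have hb0 : b = 0 := le_antisymm (ha0 ▸ hba) hb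
    simp [ha0, hb0]
  set A := Real.sqrt (2*m*Fa a) with hA
  set B := Real.sqrt (2*m*Fa b) with hB
  have ha : (0:ℝ) ≤ a := hb.trans hba
  have hFa := Fa_nonneg a ha
  have hFb := Fa_nonneg b hb
  have hA2 : A^2 = 2*m*Fa a := Real.sq_sqrt (by positivity)
  have hB2 : B^2 = 2*m*Fa b := Real.sq_sqrt (by positivity)
  have hAlow : Real.sqrt m * a ≤ A := by
    have h1 : m * a^2 ≤ 2*m*Fa a := by nlinarith [Fa_ge a ha]
    have h2 : Real.sqrt (m*a^2) = Real.sqrt m * a := by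
      rw [Real.sqrt_mul hm.le, Real.sqrt_sq ha]
    calc Real.sqrt m * a = Real.sqrt (m*a^2) := h2.symm
      _ ≤ A := Real.sqrt_le_sqrt h1
  have hBlow : Real.sqrt m * b ≤ B := by
    have h1 : m * b^2 ≤ 2*m*Fa b := by nlinarith [Fa_ge b hb]
    have h2 : Real.sqrt (m*b^2) = Real.sqrt m * b := by
      rw [Real.sqrt_mul hm.le, Real.sqrt_sq hb]
    calc Real.sqrt m * b = Real.sqrt (m*b^2) := h2.symm
      _ ≤ B := Real.sqrt_le_sqrt h1
  have hApos : 0 < A := lt_of_lt_of_le (by positivity) hAlow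
  have hABpos : 0 < A + B := by
    have := Real.sqrt_nonneg (2*m*Fa b)
    rw [← hB] at this
    linarith
  have hdiff : Fa a - Fa b ≤ Real.exp c * (a^2-b^2)/2 := Fa_diff_le c a b hb hba hac
  have hm2 : Real.sqrt m * Real.sqrt m = m := Real.mul_self_sqrt hm.le
  have hKnn : 0 ≤ Real.sqrt m * Real.exp c * (a-b) :=
    mul_nonneg (mul_nonneg (Real.sqrt_nonneg m) (Real.exp_pos c).le) (sub_nonneg.2 hba)
  have h1 : (A-B)*(A+B) ≤ (Real.sqrt m * Real.exp c * (a-b)) * (A+B) := by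
    have e : (A-B)*(A+B) = A^2 - B^2 := by ring
    rw [e, hA2, hB2]
    have step : Real.sqrt m * Real.exp c * (a-b) * (Real.sqrt m * (a+b))
        ≤ Real.sqrt m * Real.exp c * (a-b) * (A+B) := by
      apply mul_le_mul_of_nonneg_left (by linarith) hKnn
    have h3 : 2*m*(Fa a - Fa b) ≤ 2*m*(Real.exp c*(a^2-b^2)/2) :=
      mul_le_mul_of_nonneg_left hdiff (by positivity)
    nlinarith [step, h3, hm2]
  exact le_of_mul_le_mul_right h1 hABpos

lemma lip_on (m c : ℝ) (hm : 0 < m) :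
    LipschitzOnWith (Real.sqrt m * Real.exp c).toNNReal
      (fun x => -Real.sqrt (2*m*Fa x)) (Set.Icc 0 c) := by
  apply LipschitzOnWith.of_dist_le_mul
  intro x hx y hy
  rw [Real.dist_eq, Real.dist_eq, Real.coe_toNNReal _ (by positivity)]
  have key : ∀ p q : ℝ, q ∈ Set.Icc (0:ℝ) c → p ∈ Set.Icc (0:ℝ) c → q ≤ p →
      |(-Real.sqrt (2*m*Fa p)) - (-Real.sqrt (2*m*Fa q))| ≤ Real.sqrt m * Real.exp c * |p - q| := by
    intro p q hq hp hqp
    have hmono : Real.sqrt (2*m*Fa q) ≤ Real.sqrt (2*m*Fa p) := by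
      apply Real.sqrt_le_sqrt
      have := Fa_mono hq.1 (hq.1.trans hqp) hqp
      nlinarith
    have hk := sqrt_key m c hm p q hq.1 hqp hp.2
    rw [show (-Real.sqrt (2*m*Fa p)) - (-Real.sqrt (2*m*Fa q))
        = -(Real.sqrt (2*m*Fa p) - Real.sqrt (2*m*Fa q)) by ring, abs_neg,
      abs_of_nonneg (sub_nonneg.2 hmono), abs_of_nonneg (sub_nonneg.2 hqp)]
    exact hk
  rcases le_total y x with h | h
  · exact key x y hy hx h
  · have := key y x hx hy h
    rwa [abs_sub_comm, abs_sub_comm y x] at this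

theorem ode_uniqueness (m u₀ : ℝ) (hm : 0 < m) (hu₀ : 0 < u₀)
    (Ψ₁ Ψ₂ : ℝ → ℝ)
    (h₁_cont : ContinuousOn Ψ₁ (Set.Ici 0)) (h₂_cont : ContinuousOn Ψ₂ (Set.Ici 0))
    (h₁_deriv : ∀ ξ > (0 : ℝ), HasDerivAt Ψ₁ (-Real.sqrt (2 * m * Fa (Ψ₁ ξ))) ξ)
    (h₂_deriv : ∀ ξ > (0 : ℝ), HasDerivAt Ψ₂ (-Real.sqrt (2 * m * Fa (Ψ₂ ξ))) ξ)
    (h₁0 : Ψ₁ 0 = u₀) (h₂0 : Ψ₂ 0 = u₀)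
    (h₁_pos : ∀ ξ ∈ Set.Ici (0 : ℝ), 0 < Ψ₁ ξ) (h₂_pos : ∀ ξ ∈ Set.Ici (0 : ℝ), 0 < Ψ₂ ξ)
    (h₁_anti : AntitoneOn Ψ₁ (Set.Ici 0)) (h₂_anti : AntitoneOn Ψ₂ (Set.Ici 0))
    (h₁_lim : Tendsto Ψ₁ atTop (nhds 0)) (h₂_lim : Tendsto Ψ₂ atTop (nhds 0)) :
    Set.EqOn Ψ₁ Ψ₂ (Set.Ici 0) := by
  intro ξ hξ
  simp only [Set.mem_Ici] at hξ
  rcases eq_or_lt_of_le hξ with h | h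
  · rw [← h, h₁0, h₂0]
  set K : NNReal := (Real.sqrt m * Real.exp u₀).toNNReal with hK
  have hbound : ∀ ε ∈ Set.Ioo (0:ℝ) ξ,
      dist (Ψ₁ ξ) (Ψ₂ ξ) ≤ dist (Ψ₁ ε) (Ψ₂ ε) * Real.exp ((K:ℝ) * ξ) := by
    intro ε hε
    have mem₁ : ∀ t ∈ Set.Ico ε ξ, Ψ₁ t ∈ Set.Icc (0:ℝ) u₀ := by
      intro t ht
      have ht0 : (0:ℝ) ≤ t := (hε.1.trans_le ht.1).le
      exact ⟨(h₁_pos t ht0).le, h₁0 ▸ h₁_anti Set.self_mem_Ici ht0 ht0⟩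
    have mem₂ : ∀ t ∈ Set.Ico ε ξ, Ψ₂ t ∈ Set.Icc (0:ℝ) u₀ := by
      intro t ht
      have ht0 : (0:ℝ) ≤ t := (hε.1.trans_le ht.1).le
      exact ⟨(h₂_pos t ht0).le, h₂0 ▸ h₂_anti Set.self_mem_Ici ht0 ht0⟩
    have hsub : Set.Icc ε ξ ⊆ Set.Ici (0:ℝ) := fun t ht => hε.1.le.trans ht.1
    have hd := dist_le_of_trajectories_ODE_of_mem
      (v := fun _ x => -Real.sqrt (2*m*Fa x)) (s := fun _ => Set.Icc (0:ℝ) u₀) (K := K)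
      (fun _ _ => lip_on m u₀ hm)
      (h₁_cont.mono hsub)
      (fun t ht => (h₁_deriv t (hε.1.trans_le ht.1)).hasDerivWithinAt)
      mem₁
      (h₂_cont.mono hsub)
      (fun t ht => (h₂_deriv t (hε.1.trans_le ht.1)).hasDerivWithinAt)
      mem₂
      (le_refl (dist (Ψ₁ ε) (Ψ₂ ε)))
      ξ ⟨hε.2.le, le_refl ξ⟩
    calc dist (Ψ₁ ξ) (Ψ₂ ξ) ≤ dist (Ψ₁ ε) (Ψ₂ ε) * Real.exp ((K:ℝ) * (ξ - ε)) := hd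
      _ ≤ dist (Ψ₁ ε) (Ψ₂ ε) * Real.exp ((K:ℝ) * ξ) := by
          apply mul_le_mul_of_nonneg_left _ dist_nonneg
          apply Real.exp_le_exp.2
          have : (0:ℝ) ≤ (K:ℝ) := K.coe_nonneg
          nlinarith [hε.1]
  have t1 : Tendsto Ψ₁ (nhdsWithin 0 (Set.Ioi 0)) (nhds u₀) := by
    have := (h₁_cont 0 Set.self_mem_Ici).tendsto
    rw [h₁0] at this
    exact this.mono_left (nhdsWithin_mono 0 Set.Ioi_subset_Ici_self)
  have t2 : Tendsto Ψ₂ (nhdsWithin 0 (Set.Ioi 0)) (nhds u₀) := by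
    have := (h₂_cont 0 Set.self_mem_Ici).tendsto
    rw [h₂0] at this
    exact this.mono_left (nhdsWithin_mono 0 Set.Ioi_subset_Ici_self)
  have hlim : Tendsto (fun ε => dist (Ψ₁ ε) (Ψ₂ ε) * Real.exp ((K:ℝ) * ξ))
      (nhdsWithin 0 (Set.Ioi 0)) (nhds 0) := by
    have hd : Tendsto (fun ε => dist (Ψ₁ ε) (Ψ₂ ε)) (nhdsWithin 0 (Set.Ioi 0))
        (nhds (dist u₀ u₀)) := t1.dist t2
    rw [dist_self] at hd
    simpa using hd.mul_const (Real.exp ((K:ℝ) * ξ))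
  have hev : ∀ᶠ ε in nhdsWithin 0 (Set.Ioi 0),
      dist (Ψ₁ ξ) (Ψ₂ ξ) ≤ dist (Ψ₁ ε) (Ψ₂ ε) * Real.exp ((K:ℝ) * ξ) :=
    eventually_of_mem (Ioo_mem_nhdsGT_of_mem ⟨le_refl 0, h⟩) hbound
  have hle : dist (Ψ₁ ξ) (Ψ₂ ξ) ≤ 0 := ge_of_tendsto hlim hev
  exact dist_le_zero.1 hle
end
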